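/- Let σ, σ′ > 0, ρ ∈ [−1,1], and x ∈ [0,1]. Then σ·|ρ|·x + σ·√(1−ρ²)·√(1−x²) ≤ σ′·x + √(σ² − 2ρσσ′ + σ′²). Moreover, if x < 1 and equality holds, then σ′/σ = ρ − x·√((1−ρ²)/(1−x²)). -/
import Mathlib


set_option maxHeartbeats 1000000 in
/-- one step of the weighted MLMC normalised-cost recursion is
no more expensive than the standard MLMC step:
`σ|ρ|x + σ√(1−ρ²)√(1−x²) ≤ σ'x + √(σ² − 2ρσσ' + σ'²)`, with the stated
necessary condition for equality when `x < 1`. -/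
theorem wmlmc_step_le_mlmc_step
    (σ σ' ρ x : ℝ) (hσ : 0 < σ) (hσ' : 0 < σ')
    (hρ : ρ ∈ Set.Icc (-1 : ℝ) 1) (hx : x ∈ Set.Icc (0 : ℝ) 1) :
    σ * |ρ| * x + σ * Real.sqrt (1 - ρ ^ 2) * Real.sqrt (1 - x ^ 2) ≤
      σ' * x + Real.sqrt (σ ^ 2 - 2 * ρ * σ * σ' + σ' ^ 2) ∧
    (x < 1 →
      σ * |ρ| * x + σ * Real.sqrt (1 - ρ ^ 2) * Real.sqrt (1 - x ^ 2) =
        σ' * x + Real.sqrt (σ ^ 2 - 2 * ρ * σ * σ' + σ' ^ 2) →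
      σ' / σ = ρ - x * Real.sqrt ((1 - ρ ^ 2) / (1 - x ^ 2))) := by
  obtain ⟨hρ1, hρ2⟩ := hρ
  obtain ⟨hx0, hx1⟩ := hx
  set r := |ρ| with hr
  have hr0 : 0 ≤ r := abs_nonneg ρ
  have hρr : ρ ≤ r := le_abs_self ρ
  have hrsq : r ^ 2 = ρ ^ 2 := sq_abs ρ
  set s := Real.sqrt (1 - ρ ^ 2) with hs
  set t := Real.sqrt (1 - x ^ 2) with ht
  have hs0 : 0 ≤ s := Real.sqrt_nonneg _
  have ht0 : 0 ≤ t := Real.sqrt_nonneg _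
  have hssq : s ^ 2 = 1 - ρ ^ 2 := Real.sq_sqrt (by nlinarith)
  have hssq' : s ^ 2 = 1 - r ^ 2 := by rw [hssq, hrsq]
  have htsq : t ^ 2 = 1 - x ^ 2 := Real.sq_sqrt (by nlinarith)
  set A := Real.sqrt (σ ^ 2 - 2 * r * σ * σ' + σ' ^ 2) with hA
  set B := Real.sqrt (σ ^ 2 - 2 * ρ * σ * σ' + σ' ^ 2) with hB
  have hA0 : 0 ≤ A := Real.sqrt_nonneg _
  have hB0 : 0 ≤ B := Real.sqrt_nonneg _
  have hr1 : r ≤ 1 := abs_le.mpr ⟨hρ1, hρ2⟩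
  have hAsq : A ^ 2 = σ ^ 2 - 2 * r * σ * σ' + σ' ^ 2 :=
    Real.sq_sqrt (by nlinarith [sq_nonneg (r * σ - σ')])
  have hBsq : B ^ 2 = σ ^ 2 - 2 * ρ * σ * σ' + σ' ^ 2 :=
    Real.sq_sqrt (by nlinarith [sq_nonneg (ρ * σ - σ')])
  have hAB : A ≤ B := by
    apply Real.sqrt_le_sqrt
    nlinarith [mul_pos hσ hσ']
  -- Pythagoras / Lagrange identity
  have hid : A ^ 2 = ((r * σ - σ') * x + σ * s * t) ^ 2
      + ((r * σ - σ') * t - σ * s * x) ^ 2 := by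
    linear_combination hAsq - σ ^ 2 * (x ^ 2 + t ^ 2) * hssq'
      - (σ ^ 2 - 2 * r * σ * σ' + σ' ^ 2) * htsq
  have hSle : (r * σ - σ') * x + σ * s * t ≤ A := by
    nlinarith [hid, hA0, sq_nonneg ((r * σ - σ') * t - σ * s * x)]
  have hmain : σ * r * x + σ * s * t ≤ σ' * x + A := by linarith
  refine ⟨by linarith, ?_⟩
  intro hxlt heq
  have ht_pos : 0 < t := Real.sqrt_pos.mpr (by nlinarith)
  have hAeqB : A = B := le_antisymm hAB (by linarith)
  have hrρ : r = ρ := by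
    have h2 : A ^ 2 = B ^ 2 := by rw [hAeqB]
    nlinarith [mul_pos hσ hσ']
  have hSA : (r * σ - σ') * x + σ * s * t = A := by
    have : σ * r * x + σ * s * t = σ' * x + A := by rw [hAeqB]; exact heq
    linarith
  have hQ : ((r * σ - σ') * t - σ * s * x) ^ 2 = 0 := by
    linear_combination -hid - (((r * σ - σ') * x + σ * s * t) + A) * hSA
  have hkey : (ρ * σ - σ') * t = σ * s * x := by
    have := pow_eq_zero_iff (n := 2) (by norm_num) |>.mp hQ
    rw [← hrρ]; linarith
  have hdiv : Real.sqrt ((1 - ρ ^ 2) / (1 - x ^ 2)) = s / t := by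
    rw [Real.sqrt_div (by nlinarith : (0:ℝ) ≤ 1 - ρ ^ 2)]
  rw [hdiv]
  field_simp
  linear_combination -hkey
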